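/- arXiv:1501.05225 — 2 statements merged into one kernel-verified Lean document; each statement's English description precedes it below -/
import Mathlib

section
/- FastLSU on arbitrary chunks is equivalent to BH on the full set (Theorem 3): let U be the union over i = 1,…,c of the chunk-selected multisets {p ∈ C_i : p < (r*_{C_i} + m − m_i)·α/m}. Then applying the step-up search with denominators relative to the full count m to U, i.e., taking r*_C = max{i ∈ {1,…,|U|} : p_(i:U) < i·α/m} (0 if none), yields r*_C = r_C, and the resulting selected set {p ∈ U : p < r_C·α/m} equals the global BH rejection set {p ∈ C : p < r_C·α/m}. -/
open scoped Classical

/-- `#S(t)`: the number of elements of the multiset `C` that are strictly less than `t`. -/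
noncomputable def countBelow (C : Multiset ℝ) (t : ℝ) : ℕ :=
  (C.filter (fun p => p < t)).card

/-- The `k`-th smallest element (1-indexed order statistic, with multiplicity) of `D`. -/
noncomputable def orderStat (D : Multiset ℝ) (k : ℕ) : ℝ :=
  (D.sort (· ≤ ·)).getD (k - 1) 0

/-- The Benjamini–Hochberg index at level `α`:
`max {i ∈ {1,…,m} : p_(i) < i·α/m}`, with value `0` if this set is empty. -/
noncomputable def rBH (α : ℝ) (C : Multiset ℝ) : ℕ :=
  ((Finset.Icc 1 C.card).filter
    (fun i => orderStat C i < (i : ℝ) * α / (C.card : ℝ))).sup id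

/-- The chunk-level BH index of the chunk `D` inside a total problem of `m` p-values:
`max {r ∈ {1,…,|D|} : p_(r:D) < (r + m − |D|)·α/m}`, with value `0` if this set is empty. -/
noncomputable def rStarChunk (α : ℝ) (m : ℕ) (D : Multiset ℝ) : ℕ :=
  ((Finset.Icc 1 D.card).filter
    (fun r => orderStat D r < ((r + m - D.card : ℕ) : ℝ) * α / (m : ℝ))).sup id

lemma sorted_get_lt_iff (l : List ℝ) (hs : l.Pairwise (· ≤ ·)) {j : ℕ} (hj : j < l.length) (t : ℝ) :
    l.get ⟨j, hj⟩ < t ↔ j < (l.filter (fun p => decide (p < t))).length := by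
  constructor
  · intro h
    have hall : ∀ x ∈ l.take (j+1), (fun p => decide (p < t)) x = true := by
      intro x hx
      obtain ⟨k, hk, rfl⟩ := List.mem_take_iff_getElem.mp hx
      simp only [decide_eq_true_eq]
      have hk' : (⟨k, by omega⟩ : Fin l.length) ≤ ⟨j, hj⟩ := by simp; omega
      have := hs.rel_get_of_le hk'
      calc l[k] ≤ l.get ⟨j, hj⟩ := by simpa using this
        _ < t := h
    have hsub : ((l.take (j+1)).filter (fun p => decide (p < t))).length ≤ (l.filter (fun p => decide (p < t))).length :=
      ((List.take_sublist (j+1) l).filter _).length_le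
    rw [List.filter_eq_self.mpr hall, List.length_take] at hsub
    omega
  · intro h
    by_contra hge
    push_neg at hge
    have hdrop : ∀ x ∈ l.drop j, ¬ ((fun p => decide (p < t)) x = true) := by
      intro x hx
      obtain ⟨k, hk, rfl⟩ := List.mem_drop_iff_getElem.mp hx
      simp only [decide_eq_true_eq, not_lt]
      have hk' : (⟨j, hj⟩ : Fin l.length) ≤ ⟨j + k, by omega⟩ := by simp
      have := hs.rel_get_of_le hk'
      calc t ≤ l.get ⟨j, hj⟩ := hge
        _ ≤ l[j + k] := by simpa using this
    have heq : l.filter (fun p => decide (p < t)) = (l.take j).filter (fun p => decide (p < t)) := by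
      conv_lhs => rw [← List.take_append_drop j l]
      rw [List.filter_append, List.filter_eq_nil_iff.mpr hdrop, List.append_nil]
    rw [heq] at h
    have h2 := (l.take j).length_filter_le (fun p => decide (p < t))
    rw [List.length_take] at h2
    omega

lemma countBelow_eq_length (D : Multiset ℝ) (t : ℝ) :
    countBelow D t = ((D.sort (· ≤ ·)).filter (fun p => decide (p < t))).length := by
  rw [countBelow]
  conv_lhs => rw [← Multiset.sort_eq D (· ≤ ·)]
  rw [Multiset.filter_coe, Multiset.coe_card]

lemma orderStat_lt_iff (D : Multiset ℝ) {i : ℕ} (h1 : 1 ≤ i) (h2 : i ≤ D.card) (t : ℝ) :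
    orderStat D i < t ↔ i ≤ countBelow D t := by
  have hlen : (D.sort (· ≤ ·)).length = D.card := Multiset.length_sort _
  have hj : i - 1 < (D.sort (· ≤ ·)).length := by omega
  have : orderStat D i = (D.sort (· ≤ ·)).get ⟨i - 1, hj⟩ := by
    rw [orderStat, List.getD_eq_getElem _ _ hj]
    simp
  rw [this, sorted_get_lt_iff _ (D.pairwise_sort _) hj t, countBelow_eq_length]
  omega

lemma countBelow_le_card (C : Multiset ℝ) (t : ℝ) : countBelow C t ≤ C.card :=
  Multiset.card_le_card (Multiset.filter_le _ _)

lemma countBelow_mono_set {D C : Multiset ℝ} (h : D ≤ C) (t : ℝ) :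
    countBelow D t ≤ countBelow C t :=
  Multiset.card_le_card (Multiset.filter_le_filter _ h)

lemma countBelow_add (A B : Multiset ℝ) (t : ℝ) :
    countBelow (A + B) t = countBelow A t + countBelow B t := by
  simp [countBelow, Multiset.filter_add]

lemma countBelow_sum {ι : Type*} (s : Finset ι) (f : ι → Multiset ℝ) (t : ℝ) :
    countBelow (∑ i ∈ s, f i) t = ∑ i ∈ s, countBelow (f i) t := by
  induction s using Finset.cons_induction with
  | empty => simp [countBelow]
  | cons a s ha ih => rw [Finset.sum_cons, Finset.sum_cons, countBelow_add, ih]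

lemma filter_sum_multiset {ι : Type*} (s : Finset ι) (f : ι → Multiset ℝ) (p : ℝ → Prop)
    [DecidablePred p] :
    (∑ i ∈ s, f i).filter p = ∑ i ∈ s, (f i).filter p := by
  induction s using Finset.cons_induction with
  | empty => simp
  | cons a s ha ih => rw [Finset.sum_cons, Finset.sum_cons, Multiset.filter_add, ih]

lemma filter_filter_of_le (D : Multiset ℝ) {s t : ℝ} (h : t ≤ s) :
    (D.filter (fun p => p < s)).filter (fun p => p < t) = D.filter (fun p => p < t) := by
  rw [Multiset.filter_filter]
  refine Multiset.filter_congr fun p _ => ?_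
  constructor
  · exact fun h' => h'.1
  · exact fun h' => ⟨h', lt_of_lt_of_le h' h⟩

lemma countBelow_filter_of_le (D : Multiset ℝ) {s t : ℝ} (h : t ≤ s) :
    countBelow (D.filter (fun p => p < s)) t = countBelow D t := by
  rw [countBelow, filter_filter_of_le D h, countBelow]

/-- Theorem 3 of the paper: FastLSU on arbitrary chunks is equivalent to BH
on the full set: letting `U` be the union over chunks of the chunk-selected multisets,
the step-up search on `U` with denominators relative to the full count `m` yields the
global BH index `r_C`, and the resulting selected set equals the global BH rejection set. -/
theorem fastLSU_chunks_equiv_global_BH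
    (α : ℝ) (hα0 : 0 < α) (hα1 : α < 1)
    (c : ℕ) (Ch : Fin c → Multiset ℝ)
    (hvals : ∀ i, ∀ p ∈ Ch i, 0 ≤ p ∧ p ≤ 1)
    (C : Multiset ℝ) (hC : C = ∑ i, Ch i)
    (m : ℕ) (hm : m = C.card)
    (U : Multiset ℝ)
    (hU : U = ∑ i : Fin c, (Ch i).filter
        (fun p => p < ((rStarChunk α m (Ch i) + m - (Ch i).card : ℕ) : ℝ) * α / (m : ℝ))) :
    ((Finset.Icc 1 U.card).filter
        (fun i => orderStat U i < (i : ℝ) * α / (m : ℝ))).sup id = rBH α C ∧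
    U.filter (fun p => p < (rBH α C : ℝ) * α / (m : ℝ))
      = C.filter (fun p => p < (rBH α C : ℝ) * α / (m : ℝ)) := by
  classical
  rcases Nat.eq_zero_or_pos m with hm0 | hm0
  · -- degenerate case m = 0
    have hCz : C = 0 := by
      rw [← Multiset.card_eq_zero]; omega
    have hsum : ∑ j, Ch j = 0 := by rw [← hC, hCz]
    have hChz : ∀ i, Ch i = 0 := fun i =>
      (Finset.sum_eq_zero_iff.mp hsum) i (Finset.mem_univ i)
    have hUz : U = 0 := by simp [hU, hChz]
    constructor
    · simp [hUz, hCz, rBH]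
    · simp [hUz, hCz]
  -- main case
  have hmposR : (0:ℝ) < (m:ℝ) := by exact_mod_cast hm0
  set S := (Finset.Icc 1 m).filter (fun i => orderStat C i < (i:ℝ) * α / (m:ℝ)) with hS
  have hrS : rBH α C = S.sup id := by unfold rBH; rw [← hm]
  set r := S.sup id with hr
  rw [hrS]
  have hrlem : r ≤ m := by
    rw [hr]
    exact Finset.sup_le fun i hi => (Finset.mem_Icc.mp (Finset.mem_filter.mp hi).1).2
  have hChle : ∀ i, Ch i ≤ C := by
    intro i
    rw [hC]
    exact Finset.single_le_sum (f := Ch) (fun j _ => zero_le) (Finset.mem_univ i)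
  have hmile : ∀ i, (Ch i).card ≤ m := fun i => by
    rw [hm]; exact Multiset.card_le_card (hChle i)
  -- no index beyond r can qualify (count version)
  have hgt : ∀ i : ℕ, r < i → countBelow C ((i:ℝ) * α / (m:ℝ)) < i := by
    intro i hi
    by_contra hcon
    push_neg at hcon
    have hile : i ≤ m := le_trans hcon (by rw [hm]; exact countBelow_le_card C _)
    have h1 : 1 ≤ i := by omega
    have hos := (orderStat_lt_iff C h1 (by omega : i ≤ C.card) _).mpr hcon
    have hiS : i ∈ S := Finset.mem_filter.mpr ⟨Finset.mem_Icc.mpr ⟨h1, hile⟩, hos⟩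
    have := Finset.le_sup (f := id) hiS
    simp only [id] at this
    omega
  -- r itself qualifies (count version)
  have hrpos_count : 1 ≤ r → r ≤ countBelow C ((r:ℝ) * α / (m:ℝ)) := by
    intro h1
    have hne : S.Nonempty := by
      by_contra hne
      rw [Finset.not_nonempty_iff_eq_empty] at hne
      rw [hr, hne] at h1
      simp at h1
    obtain ⟨b, hb, hbe⟩ := Finset.exists_mem_eq_sup S hne id
    have hbr : b = r := by rw [hr, hbe]; rfl
    rw [← hbr]
    obtain ⟨hIcc, hlt⟩ := Finset.mem_filter.mp hb
    obtain ⟨hb1, hb2⟩ := Finset.mem_Icc.mp hIcc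
    exact (orderStat_lt_iff C hb1 (by omega : b ≤ C.card) _).mp hlt
  -- chunk-level bound
  have hchunk : ∀ i, r + (Ch i).card ≤ rStarChunk α m (Ch i) + m := by
    intro i
    by_cases hcase : r + (Ch i).card ≤ m
    · omega
    push_neg at hcase
    set k := r + (Ch i).card - m with hk
    have hk1 : 1 ≤ k := by omega
    have hkmi : k ≤ (Ch i).card := by omega
    have hr1 : 1 ≤ r := by have := hmile i; omega
    have hCBC := hrpos_count hr1
    have hsplit : Ch i + (C - Ch i) = C := by
      rw [add_comm]; exact tsub_add_cancel_of_le (hChle i)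
    have hcards : (C - Ch i).card = m - (Ch i).card := by
      rw [Multiset.card_sub (hChle i), ← hm]
    have hsum := countBelow_add (Ch i) (C - Ch i) ((r:ℝ) * α / (m:ℝ))
    rw [hsplit] at hsum
    have hrest := countBelow_le_card (C - Ch i) ((r:ℝ) * α / (m:ℝ))
    rw [hcards] at hrest
    have hkcb : k ≤ countBelow (Ch i) ((r:ℝ) * α / (m:ℝ)) := by
      have := hmile i
      omega
    have hos := (orderStat_lt_iff (Ch i) hk1 hkmi _).mpr hkcb
    have hknat : k + m - (Ch i).card = r := by omega
    have hmem : k ∈ (Finset.Icc 1 (Ch i).card).filter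
        (fun rr => orderStat (Ch i) rr < ((rr + m - (Ch i).card : ℕ):ℝ) * α / (m:ℝ)) := by
      refine Finset.mem_filter.mpr ⟨Finset.mem_Icc.mpr ⟨hk1, hkmi⟩, ?_⟩
      rw [hknat]
      exact hos
    have hks : k ≤ rStarChunk α m (Ch i) := by
      have := Finset.le_sup (f := id) hmem
      simpa [rStarChunk] using this
    omega
  -- thresholds dominate r·α/m
  have hthr : ∀ i, (r:ℝ) * α / (m:ℝ)
      ≤ ((rStarChunk α m (Ch i) + m - (Ch i).card : ℕ):ℝ) * α / (m:ℝ) := by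
    intro i
    have hn : r ≤ rStarChunk α m (Ch i) + m - (Ch i).card := by
      have := hchunk i; have := hmile i; omega
    have h1 : (r:ℝ) ≤ ((rStarChunk α m (Ch i) + m - (Ch i).card : ℕ):ℝ) := by
      exact_mod_cast hn
    gcongr
  have hUle : U ≤ C := by
    rw [hU, hC]
    exact Finset.sum_le_sum fun i _ => Multiset.filter_le _ _
  have hcbU_eq : countBelow U ((r:ℝ) * α / (m:ℝ)) = countBelow C ((r:ℝ) * α / (m:ℝ)) := by
    rw [hU, countBelow_sum]
    conv_rhs => rw [hC, countBelow_sum]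
    exact Finset.sum_congr rfl fun i _ => countBelow_filter_of_le (Ch i) (hthr i)
  constructor
  · apply le_antisymm
    · apply Finset.sup_le
      intro i hi
      obtain ⟨hIcc, hlt⟩ := Finset.mem_filter.mp hi
      obtain ⟨h1, h2⟩ := Finset.mem_Icc.mp hIcc
      have hcb := (orderStat_lt_iff U h1 h2 _).mp hlt
      have hle : i ≤ countBelow C ((i:ℝ) * α / (m:ℝ)) :=
        le_trans hcb (countBelow_mono_set hUle _)
      by_contra hgt'
      push_neg at hgt'
      have := hgt i hgt'
      omega
    · rcases Nat.eq_zero_or_pos r with h0 | h1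
      · omega
      have hcbUr : r ≤ countBelow U ((r:ℝ) * α / (m:ℝ)) := by
        rw [hcbU_eq]; exact hrpos_count h1
      have hrU : r ≤ U.card := le_trans hcbUr (countBelow_le_card U _)
      have hos : orderStat U r < (r:ℝ) * α / (m:ℝ) :=
        (orderStat_lt_iff U h1 hrU _).mpr hcbUr
      exact Finset.le_sup (f := id)
        (Finset.mem_filter.mpr ⟨Finset.mem_Icc.mpr ⟨h1, hrU⟩, hos⟩)
  · rw [hU]
    conv_rhs => rw [hC]
    rw [filter_sum_multiset, filter_sum_multiset]
    exact Finset.sum_congr rfl fun i _ => filter_filter_of_le (Ch i) (hthr i)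
end

section
/- The per-chunk FastLSU iteration computes the chunk-level index: for a chunk C_i of size m_i inside a total problem of size m, the sequence defined by s_0 = m_i and s_{k+1} = #{p ∈ C_i : p < (s_k + m − m_i)·α/m} is nonincreasing, stabilizes after at most m_i steps, and its stabilized value equals r*_{C_i} = max{r ∈ {1,…,m_i} : p_(r:C_i) < (r + m − m_i)·α/m} (0 if no such r exists). -/
open scoped Classical

lemma listA {L : List ℝ} (hL : L.Pairwise (· ≤ ·)) {r : ℕ}
    (hr1 : 1 ≤ r) (hr : r ≤ L.length) {t : ℝ} (h : L.getD (r - 1) 0 < t) :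
    r ≤ L.countP (fun p => decide (p < t)) := by
  have h1 : r - 1 < L.length := by omega
  rw [List.getD_eq_getElem _ _ h1] at h
  have hall : ∀ x ∈ L.take r, decide (x < t) = true := by
    intro x hx
    rw [List.mem_iff_getElem] at hx
    obtain ⟨i, hi, rfl⟩ := hx
    rw [List.length_take, lt_min_iff] at hi
    obtain ⟨hir, hi2⟩ := hi
    have hle : L[i] ≤ L[r-1] := by
      have := hL.rel_get_of_le (a := ⟨i, hi2⟩) (b := ⟨r-1, h1⟩)
        (by simp [Fin.mk_le_mk]; omega)
      simpa [List.get_eq_getElem] using this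
    simp only [List.getElem_take]
    simp only [decide_eq_true_eq]
    exact lt_of_le_of_lt hle h
  calc r = (L.take r).length := by rw [List.length_take]; omega
    _ = (L.take r).countP (fun p => decide (p < t)) :=
        (List.countP_eq_length.mpr hall).symm
    _ ≤ (L.take r).countP (fun p => decide (p < t))
        + (L.drop r).countP (fun p => decide (p < t)) := Nat.le_add_right _ _
    _ = L.countP (fun p => decide (p < t)) := by
        rw [← List.countP_append, List.take_append_drop]

lemma listB {L : List ℝ} (hL : L.Pairwise (· ≤ ·)) {r : ℕ}
    (hr1 : 1 ≤ r) (hr : r ≤ L.length) {t : ℝ}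
    (h : r ≤ L.countP (fun p => decide (p < t))) :
    L.getD (r - 1) 0 < t := by
  have h1 : r - 1 < L.length := by omega
  rw [List.getD_eq_getElem _ _ h1]
  by_contra hc
  push_neg at hc
  have hdrop : (L.drop (r-1)).countP (fun p => decide (p < t)) = 0 := by
    rw [List.countP_eq_zero]
    intro x hx
    rw [List.mem_iff_getElem] at hx
    obtain ⟨i, hi, rfl⟩ := hx
    have hi2 : r - 1 + i < L.length := by simp [List.length_drop] at hi; omega
    have hle : L[r-1] ≤ L[r-1+i] := by
      have := hL.rel_get_of_le (a := ⟨r-1, h1⟩) (b := ⟨r-1+i, hi2⟩)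
        (by simp [Fin.mk_le_mk])
      simpa [List.get_eq_getElem] using this
    simp only [List.getElem_drop]
    simp only [decide_eq_true_eq, not_lt]
    exact le_trans hc hle
  have hsplit : L.countP (fun p => decide (p < t))
      = (L.take (r-1)).countP (fun p => decide (p < t))
      + (L.drop (r-1)).countP (fun p => decide (p < t)) := by
    rw [← List.countP_append, List.take_append_drop]
  have htake : (L.take (r-1)).countP (fun p => decide (p < t)) ≤ r - 1 :=
    le_trans List.countP_le_length (by rw [List.length_take]; omega)
  omega

lemma countBelow_eq (C : Multiset ℝ) (t : ℝ) :
    countBelow C t = (C.sort (· ≤ ·)).countP (fun p => decide (p < t)) := by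
  rw [countBelow]
  conv_lhs => rw [← Multiset.sort_eq C (· ≤ ·)]
  rw [Multiset.filter_coe, Multiset.coe_card, List.countP_eq_length_filter]

lemma le_countBelow_iff (C : Multiset ℝ) {r : ℕ} (hr1 : 1 ≤ r) (hr : r ≤ C.card) (t : ℝ) :
    r ≤ countBelow C t ↔ orderStat C r < t := by
  have hlen : (C.sort (· ≤ ·)).length = C.card := Multiset.length_sort _
  rw [countBelow_eq, orderStat]
  constructor
  · intro h; exact listB (Multiset.pairwise_sort _ _) hr1 (by omega) h
  · intro h; exact listA (Multiset.pairwise_sort _ _) hr1 (by omega) h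

lemma countBelow_mono (C : Multiset ℝ) {t t' : ℝ} (h : t ≤ t') :
    countBelow C t ≤ countBelow C t' :=
  Multiset.card_le_card (Multiset.monotone_filter_right C (fun x hx => lt_of_lt_of_le hx h))

/-- The per-chunk FastLSU iteration computes the chunk-level index: for a
chunk `Ci` of size `mi` inside a total problem of size `m`, the sequence defined by
`s 0 = mi` and `s (k+1) = #{p ∈ Ci : p < (s k + m − mi)·α/m}` is nonincreasing,
stabilizes after at most `mi` steps, and its stabilized value equals `r*_{C_i}`. -/
theorem chunk_fastLSU_computes_rStar
    (α : ℝ) (hα0 : 0 < α) (hα1 : α < 1)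
    (m mi : ℕ) (hmi1 : 1 ≤ mi) (hmim : mi ≤ m)
    (Ci : Multiset ℝ) (hcard : Ci.card = mi)
    (hvals : ∀ p ∈ Ci, 0 ≤ p ∧ p ≤ 1)
    (s : ℕ → ℕ) (hs0 : s 0 = mi)
    (hs : ∀ k, s (k + 1) = countBelow Ci (((s k + m - mi : ℕ) : ℝ) * α / (m : ℝ))) :
    (∀ k, s (k + 1) ≤ s k) ∧
    (∃ k ≤ mi, s k = s (k + 1)) ∧
    (∀ k, s k = s (k + 1) → s k = rStarChunk α m Ci) := by
  have hm0 : 0 < m := lt_of_lt_of_le hmi1 hmim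
  set T : ℕ → ℝ := fun n => ((n + m - mi : ℕ) : ℝ) * α / (m : ℝ) with hT
  set f : ℕ → ℕ := fun n => countBelow Ci (T n) with hfdef
  have hsf : ∀ k, s (k + 1) = f (s k) := hs
  have hfle : ∀ n, f n ≤ mi := fun n => hcard ▸ countBelow_le_card Ci (T n)
  have hTmono : ∀ a b, a ≤ b → T a ≤ T b := by
    intro a b hab
    have h1 : ((a + m - mi : ℕ) : ℝ) ≤ ((b + m - mi : ℕ) : ℝ) := Nat.cast_le.mpr (by omega)
    have hm : (0:ℝ) < m := Nat.cast_pos.mpr hm0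
    simp only [hT]
    gcongr
  have hfmono : ∀ a b, a ≤ b → f a ≤ f b := fun a b h => countBelow_mono Ci (hTmono a b h)
  have hsle : ∀ k, s k ≤ mi := by
    intro k
    cases k with
    | zero => exact hs0.le
    | succ k => rw [hsf]; exact hfle _
  have hdec : ∀ k, s (k + 1) ≤ s k := by
    intro k
    induction k with
    | zero => rw [hsf, hs0]; exact hfle mi
    | succ k ih =>
      calc s (k+2) = f (s (k+1)) := hsf _
        _ ≤ f (s k) := hfmono _ _ ih
        _ = s (k+1) := (hsf k).symm
  have hkey : ∀ r, 1 ≤ r → r ≤ mi → (r ≤ f r ↔ orderStat Ci r < T r) := by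
    intro r h1 h2
    exact le_countBelow_iff Ci h1 (by omega) (T r)
  set S : Finset ℕ := (Finset.Icc 1 Ci.card).filter
    (fun r => orderStat Ci r < ((r + m - Ci.card : ℕ) : ℝ) * α / (m : ℝ)) with hS
  have hrS : rStarChunk α m Ci = S.sup id := rfl
  have hmemS : ∀ r, r ∈ S ↔ 1 ≤ r ∧ r ≤ mi ∧ orderStat Ci r < T r := by
    intro r
    rw [hS, Finset.mem_filter, Finset.mem_Icc, hcard, hT, and_assoc]
  have hstar_le : ∀ k, S.sup id ≤ s k := by
    intro k
    induction k with
    | zero =>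
      rw [hs0]
      exact Finset.sup_le fun r hr => ((hmemS r).mp hr).2.1
    | succ k ih =>
      rw [hsf]
      rcases S.eq_empty_or_nonempty with he | hne
      · rw [he]; simp
      · obtain ⟨b, hb, hbe⟩ := Finset.exists_mem_eq_sup S hne id
        rw [hbe]
        obtain ⟨hb1, hb2, hb3⟩ := (hmemS b).mp hb
        have hbf : b ≤ f b := (hkey b hb1 hb2).mpr hb3
        have hbs : b ≤ s k := le_trans (le_of_eq hbe.symm) ih
        exact le_trans hbf (hfmono _ _ hbs)
  have hfix : ∀ k, s k = s (k + 1) → s k = rStarChunk α m Ci := by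
    intro k hk
    rw [hrS]
    have hub : S.sup id ≤ s k := hstar_le k
    rcases Nat.eq_zero_or_pos (s k) with h0 | hpos
    · omega
    · have h1 : s k ≤ f (s k) := le_of_eq (hk.trans (hsf k))
      have h2 : orderStat Ci (s k) < T (s k) := (hkey (s k) hpos (hsle k)).mp h1
      have hmem : s k ∈ S := (hmemS _).mpr ⟨hpos, hsle k, h2⟩
      exact le_antisymm (Finset.le_sup (f := id) hmem) hub
  refine ⟨hdec, ?_, hfix⟩
  by_contra hcon
  push_neg at hcon
  have hstrict : ∀ k, k ≤ mi → s k ≤ mi - k := by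
    intro k hk
    induction k with
    | zero => simp [hs0]
    | succ k ih =>
      have h1 : s (k+1) ≤ s k := hdec k
      have h2 : s k ≠ s (k+1) := hcon k (by omega)
      have h3 := ih (by omega)
      omega
  have h0 : s mi = 0 := by have := hstrict mi le_rfl; omega
  have h1 : s (mi+1) = 0 := by have := hdec mi; omega
  exact hcon mi le_rfl (by omega)
end
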